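/- For every n ≥ 3, CC(n,2) = ⌈(binom(n,2) − 1)/2⌉. -/

import Mathlib

open Finset

/-- An (n,k,r)-covering: a family of k-subsets of {1,…,n} such that every
r-subset of {1,…,n} is contained in at least one block. -/
def IsCovering (n k r : ℕ) (B : Finset (Finset ℕ)) : Prop :=
  (∀ b ∈ B, b ⊆ Finset.Icc 1 n ∧ b.card = k) ∧
  ∀ s ⊆ Finset.Icc 1 n, s.card = r → ∃ b ∈ B, s ⊆ b

/-- The block graph: blocks adjacent if they share an r-subset (i.e. their
intersection has at least r elements). The family is connected if this graph is. -/
def IsConnectedFamily (r : ℕ) (B : Finset (Finset ℕ)) : Prop :=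
  (SimpleGraph.fromRel (fun b c : B => r ≤ ((b : Finset ℕ) ∩ (c : Finset ℕ)).card)).Connected

/-- The covering number C(n,k,r). -/
noncomputable def coveringNum (n k r : ℕ) : ℕ :=
  sInf {m | ∃ B : Finset (Finset ℕ), IsCovering n k r B ∧ B.card = m}

/-- C(n,r) := C(n,r+1,r). -/
noncomputable def cNum (n r : ℕ) : ℕ := coveringNum n (r+1) r

/-- The connected covering number CC(n,r). -/
noncomputable def ccNum (n r : ℕ) : ℕ :=
  sInf {m | ∃ B : Finset (Finset ℕ),
    IsCovering n (r+1) r B ∧ IsConnectedFamily r B ∧ B.card = m}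


lemma ch2succ (n : ℕ) : (n+1).choose 2 = n.choose 2 + n := by
  rw [Nat.choose_succ_succ]; simp [Nat.add_comm]

lemma ch2par : ∀ n : ℕ, (n % 4 ≤ 1 → n.choose 2 % 2 = 0) ∧ (1 < n % 4 → n.choose 2 % 2 = 1) := by
  intro n
  induction n with
  | zero => simp
  | succ n ih => have h := ch2succ n; omega

lemma tstep1 (n : ℕ) (h4 : n % 4 ≠ 2) (hn : 4 ≤ n) :
    n.choose 2 / 2 = (n-1).choose 2 / 2 + n / 2 := by
  have h1 := ch2succ (n-1)
  have h2 := ch2par n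
  have h3 := ch2par (n-1)
  have hn1 : n - 1 + 1 = n := by omega
  rw [hn1] at h1
  omega

lemma tstep3 (n : ℕ) (h4 : n % 4 = 2) (hn : 6 ≤ n) :
    n.choose 2 / 2 = (n-3).choose 2 / 2 + (3*(n-2))/2 := by
  have h1 := ch2succ (n-1)
  have h1' := ch2succ (n-2)
  have h1'' := ch2succ (n-3)
  have h2 := ch2par n
  have h3 := ch2par (n-3)
  have e1 : n - 1 + 1 = n := by omega
  have e2 : n - 2 + 1 = n - 1 := by omega
  have e3 : n - 3 + 1 = n - 2 := by omega
  rw [e1] at h1; rw [e2] at h1'; rw [e3] at h1''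
  omega


-- hom between fromRel graphs for B ⊆ B'
def famHom {r : ℕ} {B B' : Finset (Finset ℕ)} (h : B ⊆ B') :
    (SimpleGraph.fromRel (fun b c : B => r ≤ ((b : Finset ℕ) ∩ (c : Finset ℕ)).card)) →g
    (SimpleGraph.fromRel (fun b c : B' => r ≤ ((b : Finset ℕ) ∩ (c : Finset ℕ)).card)) where
  toFun := fun x => ⟨x.1, h x.2⟩
  map_rel' := by
    intro a b hab
    rw [SimpleGraph.fromRel_adj] at hab ⊢
    refine ⟨?_, hab.2⟩
    intro hc
    exact hab.1 (Subtype.ext (by have := congrArg Subtype.val hc; exact this))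

lemma conn_insert {B : Finset (Finset ℕ)} (hB : IsConnectedFamily 2 B)
    {b c : Finset ℕ} (hc : c ∈ B) (h2 : 2 ≤ (b ∩ c).card) :
    IsConnectedFamily 2 (insert b B) := by
  by_cases hb : b ∈ B
  · rwa [Finset.insert_eq_self.2 hb]
  have hsub : B ⊆ insert b B := Finset.subset_insert _ _
  unfold IsConnectedFamily at *
  set G := SimpleGraph.fromRel (fun x y : (insert b B : Finset (Finset ℕ)) =>
      2 ≤ ((x : Finset ℕ) ∩ (y : Finset ℕ)).card) with hG
  have hreach : ∀ x : (insert b B : Finset (Finset ℕ)),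
      G.Reachable x ⟨c, hsub hc⟩ := by
    intro x
    rcases Finset.mem_insert.1 x.2 with hx | hx
    · -- x = b : adjacent to c
      have hadj : G.Adj x ⟨c, hsub hc⟩ := by
        rw [hG, SimpleGraph.fromRel_adj]
        constructor
        · intro hxc
          apply hb
          have : (x : Finset ℕ) = c := congrArg Subtype.val hxc
          rw [hx] at this; rw [this]; exact hc
        · left; rw [hx]; exact h2
      exact hadj.reachable
    · have := hB.preconnected ⟨x.1, hx⟩ ⟨c, hc⟩
      have h2' := this.map (famHom hsub)
      exact h2'
  haveI : Nonempty { x // x ∈ insert b B } := ⟨⟨b, Finset.mem_insert_self _ _⟩⟩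
  exact ⟨fun x y => (hreach x).trans (hreach y).symm⟩

lemma conn_union {B D : Finset (Finset ℕ)} (hB : IsConnectedFamily 2 B)
    (hD : ∀ d ∈ D, ∃ c ∈ B, 2 ≤ (d ∩ c).card) :
    IsConnectedFamily 2 (B ∪ D) := by
  classical
  induction D using Finset.induction_on with
  | empty => simpa using hB
  | @insert d D' hnd ih =>
    rw [Finset.union_insert]
    obtain ⟨c, hcB, hc2⟩ := hD d (Finset.mem_insert_self _ _)
    exact conn_insert (ih (fun e he => hD e (Finset.mem_insert_of_mem he)))
      (Finset.mem_union_left _ hcB) hc2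

lemma conn_singleton (b : Finset ℕ) : IsConnectedFamily 2 {b} := by
  haveI : Nonempty { x // x ∈ ({b} : Finset (Finset ℕ)) } := ⟨⟨b, Finset.mem_singleton_self _⟩⟩
  refine ⟨fun x y => ?_⟩
  have : x = y := by
    apply Subtype.ext
    have hx := Finset.mem_singleton.1 x.2
    have hy := Finset.mem_singleton.1 y.2
    rw [hx, hy]
  rw [this]


lemma walk_cross {V : Type*} [DecidableEq V] (G : SimpleGraph V) (S : Finset V)
    {a w : V} (p : G.Walk a w) :
    w ∉ S → a ∈ S → ∃ u ∈ S, ∃ v, v ∉ S ∧ G.Adj u v := by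
  induction p with
  | nil => exact fun hw ha => absurd ha hw
  | @cons x y z h p ih =>
    exact fun hw ha => if hy : y ∈ S then ih hw hy else ⟨x, ha, y, hy, h⟩

lemma crossing {V : Type*} [DecidableEq V] (G : SimpleGraph V) (hpre : G.Preconnected)
    (S : Finset V) (hne : S.Nonempty) (w : V) (hw : w ∉ S) :
    ∃ u ∈ S, ∃ v, v ∉ S ∧ G.Adj u v := by
  obtain ⟨u0, hu0⟩ := hne
  obtain ⟨p⟩ := hpre u0 w
  exact walk_cross G S p hw hu0

lemma sup_card_le {V : Type*} [Fintype V] [DecidableEq V] (G : SimpleGraph V)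
    (hG : G.Connected) (f : V → Finset (Finset ℕ))
    (h3 : ∀ v, (f v).card ≤ 3)
    (hadj : ∀ u v, G.Adj u v → (f u ∩ f v).Nonempty) :
    (Finset.univ.sup f).card ≤ 2 * Fintype.card V + 1 := by
  classical
  haveI hne : Nonempty V := hG.nonempty
  have key : ∀ m : ℕ, 1 ≤ m → m ≤ Fintype.card V →
      ∃ S : Finset V, S.card = m ∧ (S.sup f).card ≤ 2 * m + 1 := by
    intro m hm
    induction m, hm using Nat.le_induction with
    | base =>
      intro _
      obtain ⟨v⟩ := hne
      exact ⟨{v}, Finset.card_singleton _, by simpa using h3 v⟩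
    | succ m hm ih =>
      intro hle
      obtain ⟨S, hScard, hSsup⟩ := ih (by omega)
      have hSne : S.Nonempty := Finset.card_pos.1 (by omega)
      have hSnu : ∃ w, w ∉ S := by
        by_contra hc
        push_neg at hc
        have : S = Finset.univ := Finset.eq_univ_iff_forall.2 hc
        rw [this, Finset.card_univ] at hScard
        omega
      obtain ⟨w, hw⟩ := hSnu
      obtain ⟨u, huS, v, hvS, hadjuv⟩ := crossing G hG.preconnected S hSne w hw
      refine ⟨insert v S, ?_, ?_⟩
      · rw [Finset.card_insert_of_notMem hvS, hScard]
      · rw [Finset.sup_insert]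
        have hsub : (f v ⊔ S.sup f : Finset (Finset ℕ)) ⊆ (f v \ S.sup f) ∪ S.sup f := by
          intro x hx
          rcases Finset.mem_union.1 hx with hx | hx
          · by_cases hxs : x ∈ S.sup f
            · exact Finset.mem_union_right _ hxs
            · exact Finset.mem_union_left _ (Finset.mem_sdiff.2 ⟨hx, hxs⟩)
          · exact Finset.mem_union_right _ hx
        have hc1 : (f v ⊔ S.sup f).card ≤ (f v \ S.sup f).card + (S.sup f).card :=
          le_trans (Finset.card_le_card hsub) (Finset.card_union_le _ _)
        have hx : ∃ x, x ∈ f v ∧ x ∈ S.sup f := by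
          obtain ⟨x, hx⟩ := hadj u v hadjuv
          rw [Finset.mem_inter] at hx
          exact ⟨x, hx.2, Finset.mem_sup.2 ⟨u, huS, hx.1⟩⟩
        obtain ⟨x, hxv, hxS⟩ := hx
        have hsd : f v \ S.sup f ⊆ (f v).erase x := by
          intro y hy
          rw [Finset.mem_sdiff] at hy
          exact Finset.mem_erase.2 ⟨fun h => hy.2 (h ▸ hxS), hy.1⟩
        have hc2 : (f v \ S.sup f).card ≤ 2 := by
          have := Finset.card_le_card hsd
          rw [Finset.card_erase_of_mem hxv] at this
          have := h3 v
          omega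
        omega
  obtain ⟨S, hScard, hSsup⟩ := key (Fintype.card V) Fintype.card_pos le_rfl
  have : S = Finset.univ := Finset.eq_univ_of_card S hScard
  rw [this] at hSsup
  omega

lemma lower_bound (n : ℕ) (B : Finset (Finset ℕ)) (hC : IsCovering n 3 2 B)
    (hconn : IsConnectedFamily 2 B) : n.choose 2 / 2 ≤ B.card := by
  classical
  set G := SimpleGraph.fromRel (fun b c : B => 2 ≤ ((b : Finset ℕ) ∩ (c : Finset ℕ)).card)
    with hGdef
  set f : B → Finset (Finset ℕ) := fun v => (v : Finset ℕ).powersetCard 2 with hfdef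
  have h3 : ∀ v : B, (f v).card ≤ 3 := by
    intro v
    rw [hfdef]
    simp only [Finset.card_powersetCard]
    rw [(hC.1 v.1 v.2).2]
    decide
  have hadj : ∀ u v : B, G.Adj u v → (f u ∩ f v).Nonempty := by
    intro u v huv
    rw [hGdef, SimpleGraph.fromRel_adj] at huv
    have h2 : 2 ≤ ((u : Finset ℕ) ∩ (v : Finset ℕ)).card := by
      rcases huv.2 with h | h
      · exact h
      · rwa [Finset.inter_comm]
    obtain ⟨t, hts, htc⟩ := Finset.exists_subset_card_eq h2
    refine ⟨t, Finset.mem_inter.2 ⟨?_, ?_⟩⟩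
    · exact Finset.mem_powersetCard.2 ⟨hts.trans Finset.inter_subset_left, htc⟩
    · exact Finset.mem_powersetCard.2 ⟨hts.trans Finset.inter_subset_right, htc⟩
  have hcon : G.Connected := hconn
  have hkey := sup_card_le G hcon f h3 hadj
  have hcov : (Finset.Icc 1 n).powersetCard 2 ⊆ Finset.univ.sup f := by
    intro s hs
    rw [Finset.mem_powersetCard] at hs
    obtain ⟨b, hbB, hsb⟩ := hC.2 s hs.1 hs.2
    have : s ∈ f ⟨b, hbB⟩ := Finset.mem_powersetCard.2 ⟨hsb, hs.2⟩
    exact Finset.mem_sup.2 ⟨⟨b, hbB⟩, Finset.mem_univ _, this⟩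
  have hcard : ((Finset.Icc 1 n).powersetCard 2).card = n.choose 2 := by
    rw [Finset.card_powersetCard, Nat.card_Icc]
    norm_num
  have h1 : n.choose 2 ≤ (Finset.univ.sup f).card := by
    rw [← hcard]; exact Finset.card_le_card hcov
  have h2 : Fintype.card B = B.card := Fintype.card_coe B
  omega


def sstep (n : ℕ) : Finset (Finset ℕ) :=
  (Finset.Icc 1 ((n-1)/2)).image (fun i => {2*i-1, 2*i, n}) ∪
  (if n % 2 = 0 then {({n-2, n-1, n} : Finset ℕ)} else ∅)

def dstep (n : ℕ) : Finset (Finset ℕ) :=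
  insert {1, n-1, n}
  (insert {n-2, n-1, n}
  (insert {n-3, n-2, n-1}
  (insert {n-4, n-3, n-1}
  ((Finset.Icc 1 ((n-4)/2)).image (fun i => {2*i-1, 2*i, n-2}) ∪
   (Finset.Icc 1 ((n-6)/2)).image (fun i => {2*i, 2*i+1, n-1}) ∪
   (Finset.Icc 1 ((n-4)/2)).image (fun i => {2*i, 2*i+1, n})))))

def F : ℕ → Finset (Finset ℕ)
  | 0 => ∅
  | 1 => ∅
  | 2 => ∅
  | 3 => {{1,2,3}}
  | (n+4) => if (n+4) % 4 = 2 then F (n+1) ∪ dstep (n+4) else F (n+3) ∪ sstep (n+4)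

lemma F_single (n : ℕ) (hn : 4 ≤ n) (h : n % 4 ≠ 2) : F n = F (n-1) ∪ sstep n := by
  obtain ⟨m, rfl⟩ : ∃ m, n = m + 4 := ⟨n - 4, by omega⟩
  rw [F, if_neg h]
  norm_num

lemma F_double (n : ℕ) (hn : 4 ≤ n) (h : n % 4 = 2) : F n = F (n-3) ∪ dstep n := by
  obtain ⟨m, rfl⟩ : ∃ m, n = m + 4 := ⟨n - 4, by omega⟩
  rw [F, if_pos h]
  congr 1

lemma card_triple {a b c : ℕ} (h1 : a ≠ b) (h2 : a ≠ c) (h3 : b ≠ c) :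
    ({a,b,c} : Finset ℕ).card = 3 := by
  rw [Finset.card_insert_of_notMem (by simp [h1, h2]),
      Finset.card_insert_of_notMem (by simp [h3]), Finset.card_singleton]

lemma triple_subset_Icc {a b c lo hi : ℕ} (ha : lo ≤ a ∧ a ≤ hi) (hb : lo ≤ b ∧ b ≤ hi)
    (hc : lo ≤ c ∧ c ≤ hi) : ({a,b,c} : Finset ℕ) ⊆ Finset.Icc lo hi := by
  simp only [Finset.insert_subset_iff, Finset.singleton_subset_iff, Finset.mem_Icc]
  exact ⟨ha, hb, hc⟩

lemma two_le_inter {x y : ℕ} {b c : Finset ℕ} (hxy : x ≠ y) (hxb : x ∈ b) (hyb : y ∈ b)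
    (hxc : x ∈ c) (hyc : y ∈ c) : 2 ≤ (b ∩ c).card := by
  have hsub : ({x, y} : Finset ℕ) ⊆ b ∩ c := by
    simp only [Finset.insert_subset_iff, Finset.singleton_subset_iff, Finset.mem_inter]
    exact ⟨⟨hxb, hxc⟩, hyb, hyc⟩
  calc 2 = ({x,y} : Finset ℕ).card := (Finset.card_pair hxy).symm
    _ ≤ _ := Finset.card_le_card hsub

lemma sstep_blocks (n : ℕ) (hn : 4 ≤ n) : ∀ b ∈ sstep n, b ⊆ Finset.Icc 1 n ∧ b.card = 3 := by
  intro b hb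
  rcases Finset.mem_union.1 hb with hb | hb
  · obtain ⟨i, hi, rfl⟩ := Finset.mem_image.1 hb
    simp only [Finset.mem_Icc] at hi
    exact ⟨triple_subset_Icc (by omega) (by omega) (by omega),
           card_triple (by omega) (by omega) (by omega)⟩
  · rcases Nat.decEq (n % 2) 0 with h | h
    · rw [if_neg h] at hb; simp at hb
    · rw [if_pos h] at hb
      rw [Finset.mem_singleton] at hb
      subst hb
      exact ⟨triple_subset_Icc (by omega) (by omega) (by omega),
             card_triple (by omega) (by omega) (by omega)⟩

lemma sstep_cover (n : ℕ) (hn : 4 ≤ n) :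
    ∀ x, 1 ≤ x → x < n → ∃ b ∈ sstep n, x ∈ b ∧ n ∈ b := by
  intro x hx1 hxn
  by_cases hsm : x ≤ 2 * ((n-1)/2)
  · refine ⟨{2*((x+1)/2)-1, 2*((x+1)/2), n}, ?_, ?_, ?_⟩
    · exact Finset.mem_union_left _ (Finset.mem_image.2 ⟨(x+1)/2,
        Finset.mem_Icc.2 (by omega), rfl⟩)
    · simp only [Finset.mem_insert, Finset.mem_singleton]; omega
    · simp
  · have hev : n % 2 = 0 ∧ x = n - 1 := by omega
    refine ⟨{n-2, n-1, n}, ?_, ?_, ?_⟩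
    · refine Finset.mem_union_right _ ?_
      rw [if_pos hev.1]
      exact Finset.mem_singleton_self _
    · simp only [Finset.mem_insert, Finset.mem_singleton]; omega
    · simp

lemma sstep_new (n : ℕ) (hn : 4 ≤ n) : ∀ b ∈ sstep n, n ∈ b := by
  intro b hb
  rcases Finset.mem_union.1 hb with hb | hb
  · obtain ⟨i, hi, rfl⟩ := Finset.mem_image.1 hb
    simp
  · rcases Nat.decEq (n % 2) 0 with h | h
    · rw [if_neg h] at hb; simp at hb
    · rw [if_pos h] at hb
      rw [Finset.mem_singleton] at hb
      subst hb; simp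

lemma sstep_card (n : ℕ) (hn : 4 ≤ n) : (sstep n).card = n / 2 := by
  have himg : ((Finset.Icc 1 ((n-1)/2)).image (fun i => ({2*i-1, 2*i, n} : Finset ℕ))).card
      = (n-1)/2 := by
    rw [Finset.card_image_of_injOn, Nat.card_Icc]
    · omega
    · intro i hi j hj hij
      simp only [Finset.mem_Icc, Finset.coe_Icc, Set.mem_Icc] at hi hj
      simp only at hij
      have h1 : 2*i ∈ ({2*j-1, 2*j, n} : Finset ℕ) := by
        rw [← hij]; simp
      simp only [Finset.mem_insert, Finset.mem_singleton] at h1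
      omega
  rcases Nat.decEq (n % 2) 0 with h | h
  · rw [sstep, if_neg h, Finset.union_empty, himg]; omega
  · rw [sstep, if_pos h, Finset.card_union_of_disjoint, himg, Finset.card_singleton]
    · omega
    · rw [Finset.disjoint_singleton_right]
      intro hmem
      obtain ⟨i, hi, heq⟩ := Finset.mem_image.1 hmem
      simp only [Finset.mem_Icc] at hi
      have h1 : n - 1 ∈ ({2*i-1, 2*i, n} : Finset ℕ) := by rw [heq]; simp
      simp only [Finset.mem_insert, Finset.mem_singleton] at h1
      omega

lemma cover_union {p n : ℕ} {B D : Finset (Finset ℕ)} (hpn : p ≤ n) (hp : 1 ≤ p)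
    (hB : IsCovering p 3 2 B)
    (hDb : ∀ b ∈ D, b ⊆ Finset.Icc 1 n ∧ b.card = 3)
    (hDcov : ∀ x y, 1 ≤ x → x < y → y ≤ n → p < y → ∃ b ∈ D, x ∈ b ∧ y ∈ b) :
    IsCovering n 3 2 (B ∪ D) := by
  constructor
  · intro b hb
    rcases Finset.mem_union.1 hb with hb | hb
    · exact ⟨((hB.1 b hb).1).trans (Finset.Icc_subset_Icc le_rfl hpn), (hB.1 b hb).2⟩
    · exact hDb b hb
  · intro s hs hcard
    have aux : ∀ x y, ({x,y} : Finset ℕ) ⊆ Finset.Icc 1 n → x < y →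
        ∃ b ∈ B ∪ D, ({x,y} : Finset ℕ) ⊆ b := by
      intro x y hsub hlt
      simp only [Finset.insert_subset_iff, Finset.singleton_subset_iff, Finset.mem_Icc] at hsub
      by_cases hy : y ≤ p
      · obtain ⟨b, hbB, hsb⟩ := hB.2 {x,y} (by
          simp only [Finset.insert_subset_iff, Finset.singleton_subset_iff, Finset.mem_Icc]
          omega) (Finset.card_pair (by omega))
        exact ⟨b, Finset.mem_union_left _ hbB, hsb⟩
      · obtain ⟨b, hbD, hxb, hyb⟩ := hDcov x y (by omega) hlt (by omega) (by omega)
        exact ⟨b, Finset.mem_union_right _ hbD,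
          by simp only [Finset.insert_subset_iff, Finset.singleton_subset_iff]; exact ⟨hxb, hyb⟩⟩
    obtain ⟨x, y, hxy, rfl⟩ := Finset.card_eq_two.1 hcard
    rcases Nat.lt_or_ge x y with h | h
    · exact aux x y hs h
    · rw [Finset.pair_comm]
      rw [Finset.pair_comm] at hs
      exact aux y x hs (by omega)

lemma card_union_new {p : ℕ} {B D : Finset (Finset ℕ)}
    (hB : ∀ b ∈ B, b ⊆ Finset.Icc 1 p)
    (hD : ∀ d ∈ D, ∃ e ∈ d, p < e) : (B ∪ D).card = B.card + D.card := by
  rw [Finset.card_union_of_disjoint]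
  rw [Finset.disjoint_left]
  intro a haB haD
  obtain ⟨e, heD, hep⟩ := hD a haD
  have := Finset.mem_Icc.1 (hB a haB heD)
  omega

section dstep_lemmas
variable {n : ℕ}

lemma dstep_mem {b : Finset ℕ} (hb : b ∈ dstep n) :
    b = {1,n-1,n} ∨ b = {n-2,n-1,n} ∨ b = {n-3,n-2,n-1} ∨ b = {n-4,n-3,n-1} ∨
    (((∃ i, (1 ≤ i ∧ i ≤ (n-4)/2) ∧ ({2*i-1,2*i,n-2} : Finset ℕ) = b) ∨
    (∃ i, (1 ≤ i ∧ i ≤ (n-6)/2) ∧ ({2*i,2*i+1,n-1} : Finset ℕ) = b)) ∨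
    (∃ i, (1 ≤ i ∧ i ≤ (n-4)/2) ∧ ({2*i,2*i+1,n} : Finset ℕ) = b)) := by
  simpa only [dstep, Finset.mem_insert, Finset.mem_union, Finset.mem_image,
    Finset.mem_Icc] using hb

lemma dstep_blocks (hn : 6 ≤ n) :
    ∀ b ∈ dstep n, b ⊆ Finset.Icc 1 n ∧ b.card = 3 := by
  intro b hb
  rcases dstep_mem hb with h | h | h | h | (⟨i, hi, h⟩ | ⟨i, hi, h⟩) | ⟨i, hi, h⟩ <;>
    subst h <;>
    exact ⟨triple_subset_Icc (by omega) (by omega) (by omega),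
           card_triple (by omega) (by omega) (by omega)⟩

lemma dstep_new (hn : 6 ≤ n) : ∀ b ∈ dstep n, ∃ e ∈ b, n - 3 < e := by
  intro b hb
  rcases dstep_mem hb with h | h | h | h | (⟨i, hi, h⟩ | ⟨i, hi, h⟩) | ⟨i, hi, h⟩ <;> subst h
  · exact ⟨n, by simp, by omega⟩
  · exact ⟨n, by simp, by omega⟩
  · exact ⟨n-2, by simp, by omega⟩
  · exact ⟨n-1, by simp, by omega⟩
  · exact ⟨n-2, by simp, by omega⟩
  · exact ⟨n-1, by simp, by omega⟩
  · exact ⟨n, by simp, by omega⟩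

lemma dstep_cover (hn : 6 ≤ n) (h4 : n % 4 = 2) :
    ∀ x y, 1 ≤ x → x < y → y ≤ n → n - 3 < y → ∃ b ∈ dstep n, x ∈ b ∧ y ∈ b := by
  intro x y hx1 hxy hyn hy3
  have memX : ({1,n-1,n} : Finset ℕ) ∈ dstep n := Finset.mem_insert_self _ _
  have memT : ({n-2,n-1,n} : Finset ℕ) ∈ dstep n :=
    Finset.mem_insert_of_mem (Finset.mem_insert_self _ _)
  have memM : ({n-3,n-2,n-1} : Finset ℕ) ∈ dstep n :=
    Finset.mem_insert_of_mem (Finset.mem_insert_of_mem (Finset.mem_insert_self _ _))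
  have memP : ({n-4,n-3,n-1} : Finset ℕ) ∈ dstep n :=
    Finset.mem_insert_of_mem (Finset.mem_insert_of_mem (Finset.mem_insert_of_mem
      (Finset.mem_insert_self _ _)))
  have memE : ∀ i, 1 ≤ i → i ≤ (n-4)/2 → ({2*i-1,2*i,n-2} : Finset ℕ) ∈ dstep n := by
    intro i h1 h2
    refine Finset.mem_insert_of_mem (Finset.mem_insert_of_mem (Finset.mem_insert_of_mem
      (Finset.mem_insert_of_mem ?_)))
    exact Finset.mem_union_left _ (Finset.mem_union_left _
      (Finset.mem_image.2 ⟨i, Finset.mem_Icc.2 ⟨h1, h2⟩, rfl⟩))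
  have memA : ∀ i, 1 ≤ i → i ≤ (n-6)/2 → ({2*i,2*i+1,n-1} : Finset ℕ) ∈ dstep n := by
    intro i h1 h2
    refine Finset.mem_insert_of_mem (Finset.mem_insert_of_mem (Finset.mem_insert_of_mem
      (Finset.mem_insert_of_mem ?_)))
    exact Finset.mem_union_left _ (Finset.mem_union_right _
      (Finset.mem_image.2 ⟨i, Finset.mem_Icc.2 ⟨h1, h2⟩, rfl⟩))
  have memB : ∀ i, 1 ≤ i → i ≤ (n-4)/2 → ({2*i,2*i+1,n} : Finset ℕ) ∈ dstep n := by
    intro i h1 h2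
    refine Finset.mem_insert_of_mem (Finset.mem_insert_of_mem (Finset.mem_insert_of_mem
      (Finset.mem_insert_of_mem ?_)))
    exact Finset.mem_union_right _
      (Finset.mem_image.2 ⟨i, Finset.mem_Icc.2 ⟨h1, h2⟩, rfl⟩)
  have hy : y = n - 2 ∨ y = n - 1 ∨ y = n := by omega
  rcases hy with hc | hc | hc
  · -- y = n-2
    by_cases hx : x ≤ n - 4
    · refine ⟨{2*((x+1)/2)-1, 2*((x+1)/2), n-2}, memE ((x+1)/2) (by omega) (by omega), ?_, ?_⟩ <;>
        · simp only [Finset.mem_insert, Finset.mem_singleton]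
          omega
    · refine ⟨{n-3,n-2,n-1}, memM, ?_, ?_⟩ <;>
        · simp only [Finset.mem_insert, Finset.mem_singleton]
          omega
  · -- y = n-1
    rcases (by omega : x = 1 ∨ (2 ≤ x ∧ x ≤ n-5) ∨ x = n-4 ∨ x = n-3 ∨ x = n-2) with
      hx | hx | hx | hx | hx
    · refine ⟨{1,n-1,n}, memX, ?_, ?_⟩ <;>
        · simp only [Finset.mem_insert, Finset.mem_singleton]
          omega
    · refine ⟨{2*(x/2), 2*(x/2)+1, n-1}, memA (x/2) (by omega) (by omega), ?_, ?_⟩ <;>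
        · simp only [Finset.mem_insert, Finset.mem_singleton]
          omega
    · refine ⟨{n-4,n-3,n-1}, memP, ?_, ?_⟩ <;>
        · simp only [Finset.mem_insert, Finset.mem_singleton]
          omega
    · refine ⟨{n-3,n-2,n-1}, memM, ?_, ?_⟩ <;>
        · simp only [Finset.mem_insert, Finset.mem_singleton]
          omega
    · refine ⟨{n-2,n-1,n}, memT, ?_, ?_⟩ <;>
        · simp only [Finset.mem_insert, Finset.mem_singleton]
          omega
  · -- y = n
    rcases (by omega : x = 1 ∨ (2 ≤ x ∧ x ≤ n-3) ∨ x = n-2 ∨ x = n-1) with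
      hx | hx | hx | hx
    · refine ⟨{1,n-1,n}, memX, ?_, ?_⟩ <;>
        · simp only [Finset.mem_insert, Finset.mem_singleton]
          omega
    · refine ⟨{2*(x/2), 2*(x/2)+1, n}, memB (x/2) (by omega) (by omega), ?_, ?_⟩ <;>
        · simp only [Finset.mem_insert, Finset.mem_singleton]
          omega
    · refine ⟨{n-2,n-1,n}, memT, ?_, ?_⟩ <;>
        · simp only [Finset.mem_insert, Finset.mem_singleton]
          omega
    · refine ⟨{n-2,n-1,n}, memT, ?_, ?_⟩ <;>
        · simp only [Finset.mem_insert, Finset.mem_singleton]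
          omega


lemma triple_ne {a b c d e f : ℕ} (x : ℕ) (h1 : x = a ∨ x = b ∨ x = c)
    (h2 : ¬(x = d ∨ x = e ∨ x = f)) : ({a,b,c} : Finset ℕ) ≠ {d,e,f} := by
  intro h
  have := Finset.ext_iff.1 h x
  simp only [Finset.mem_insert, Finset.mem_singleton] at this
  tauto

lemma dstep_card (hn : 6 ≤ n) (h4 : n % 4 = 2) : (dstep n).card = 3*(n-2)/2 := by
  classical
  set E := (Finset.Icc 1 ((n-4)/2)).image (fun i => ({2*i-1, 2*i, n-2} : Finset ℕ)) with hE
  set A := (Finset.Icc 1 ((n-6)/2)).image (fun i => ({2*i, 2*i+1, n-1} : Finset ℕ)) with hA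
  set B := (Finset.Icc 1 ((n-4)/2)).image (fun i => ({2*i, 2*i+1, n} : Finset ℕ)) with hB
  have memE : ∀ b ∈ E, ∃ i, (1 ≤ i ∧ i ≤ (n-4)/2) ∧ ({2*i-1,2*i,n-2} : Finset ℕ) = b := by
    intro b hb
    obtain ⟨i, hi, heq⟩ := Finset.mem_image.1 hb
    exact ⟨i, Finset.mem_Icc.1 hi, heq⟩
  have memA : ∀ b ∈ A, ∃ i, (1 ≤ i ∧ i ≤ (n-6)/2) ∧ ({2*i,2*i+1,n-1} : Finset ℕ) = b := by
    intro b hb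
    obtain ⟨i, hi, heq⟩ := Finset.mem_image.1 hb
    exact ⟨i, Finset.mem_Icc.1 hi, heq⟩
  have memB : ∀ b ∈ B, ∃ i, (1 ≤ i ∧ i ≤ (n-4)/2) ∧ ({2*i,2*i+1,n} : Finset ℕ) = b := by
    intro b hb
    obtain ⟨i, hi, heq⟩ := Finset.mem_image.1 hb
    exact ⟨i, Finset.mem_Icc.1 hi, heq⟩
  have hEcard : E.card = (n-4)/2 := by
    rw [hE, Finset.card_image_of_injOn, Nat.card_Icc]
    · omega
    · intro i hi j hj hij
      simp only [Finset.coe_Icc, Set.mem_Icc] at hi hj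
      simp only at hij
      have h1 : 2*i ∈ ({2*j-1, 2*j, n-2} : Finset ℕ) := by rw [← hij]; simp
      simp only [Finset.mem_insert, Finset.mem_singleton] at h1
      omega
  have hAcard : A.card = (n-6)/2 := by
    rw [hA, Finset.card_image_of_injOn, Nat.card_Icc]
    · omega
    · intro i hi j hj hij
      simp only [Finset.coe_Icc, Set.mem_Icc] at hi hj
      simp only at hij
      have h1 : 2*i ∈ ({2*j, 2*j+1, n-1} : Finset ℕ) := by rw [← hij]; simp
      simp only [Finset.mem_insert, Finset.mem_singleton] at h1
      omega
  have hBcard : B.card = (n-4)/2 := by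
    rw [hB, Finset.card_image_of_injOn, Nat.card_Icc]
    · omega
    · intro i hi j hj hij
      simp only [Finset.coe_Icc, Set.mem_Icc] at hi hj
      simp only at hij
      have h1 : 2*i ∈ ({2*j, 2*j+1, n} : Finset ℕ) := by rw [← hij]; simp
      simp only [Finset.mem_insert, Finset.mem_singleton] at h1
      omega
  have hUcard : (E ∪ A ∪ B).card = (n-4)/2 + (n-6)/2 + (n-4)/2 := by
    rw [Finset.card_union_of_disjoint, Finset.card_union_of_disjoint, hEcard, hAcard, hBcard]
    · rw [Finset.disjoint_left]
      intro b hbE hbA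
      obtain ⟨i, hi, hieq⟩ := memE b hbE
      obtain ⟨j, hj, hjeq⟩ := memA b hbA
      rw [← hjeq] at hieq
      have h1 : n-2 ∈ ({2*j, 2*j+1, n-1} : Finset ℕ) := by rw [← hieq]; simp
      simp only [Finset.mem_insert, Finset.mem_singleton] at h1
      omega
    · rw [Finset.disjoint_left]
      intro b hbEA hbB
      obtain ⟨j, hj, hjeq⟩ := memB b hbB
      rcases Finset.mem_union.1 hbEA with hb | hb
      · obtain ⟨i, hi, hieq⟩ := memE b hb
        rw [← hjeq] at hieq
        have h1 : n-2 ∈ ({2*j, 2*j+1, n} : Finset ℕ) := by rw [← hieq]; simp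
        simp only [Finset.mem_insert, Finset.mem_singleton] at h1
        omega
      · obtain ⟨i, hi, hieq⟩ := memA b hb
        rw [← hjeq] at hieq
        have h1 : n-1 ∈ ({2*j, 2*j+1, n} : Finset ℕ) := by rw [← hieq]; simp
        simp only [Finset.mem_insert, Finset.mem_singleton] at h1
        omega
  have hnotU : ∀ (t : Finset ℕ) (eE eA eB : ℕ),
      (eE ∈ t) → (eA ∈ t) → (eB ∈ t) →
      (∀ i, 1 ≤ i → i ≤ (n-4)/2 → eE ∉ ({2*i-1,2*i,n-2} : Finset ℕ)) →
      (∀ i, 1 ≤ i → i ≤ (n-6)/2 → eA ∉ ({2*i,2*i+1,n-1} : Finset ℕ)) →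
      (∀ i, 1 ≤ i → i ≤ (n-4)/2 → eB ∉ ({2*i,2*i+1,n} : Finset ℕ)) →
      t ∉ E ∪ A ∪ B := by
    intro t eE eA eB hE1 hA1 hB1 hE2 hA2 hB2 hmem
    rcases Finset.mem_union.1 hmem with hmem | hmem
    · rcases Finset.mem_union.1 hmem with hmem | hmem
      · obtain ⟨i, hi, hieq⟩ := memE t hmem
        exact hE2 i hi.1 hi.2 (hieq ▸ hE1)
      · obtain ⟨i, hi, hieq⟩ := memA t hmem
        exact hA2 i hi.1 hi.2 (hieq ▸ hA1)
    · obtain ⟨i, hi, hieq⟩ := memB t hmem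
      exact hB2 i hi.1 hi.2 (hieq ▸ hB1)
  have hPU : ({n-4,n-3,n-1} : Finset ℕ) ∉ E ∪ A ∪ B := by
    refine hnotU _ (n-1) (n-3) (n-1) (by simp) (by simp) (by simp) ?_ ?_ ?_ <;>
      · intro i h1 h2
        simp only [Finset.mem_insert, Finset.mem_singleton]
        omega
  have hMP : ({n-3,n-2,n-1} : Finset ℕ) ≠ {n-4,n-3,n-1} := triple_ne (n-2) (by omega) (by omega)
  have hMU : ({n-3,n-2,n-1} : Finset ℕ) ∉ E ∪ A ∪ B := by
    refine hnotU _ (n-1) (n-2) (n-2) (by simp) (by simp) (by simp) ?_ ?_ ?_ <;>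
      · intro i h1 h2
        simp only [Finset.mem_insert, Finset.mem_singleton]
        omega
  have hTM : ({n-2,n-1,n} : Finset ℕ) ≠ {n-3,n-2,n-1} := triple_ne n (by omega) (by omega)
  have hTP : ({n-2,n-1,n} : Finset ℕ) ≠ {n-4,n-3,n-1} := triple_ne n (by omega) (by omega)
  have hTU : ({n-2,n-1,n} : Finset ℕ) ∉ E ∪ A ∪ B := by
    refine hnotU _ n n (n-2) (by simp) (by simp) (by simp) ?_ ?_ ?_ <;>
      · intro i h1 h2
        simp only [Finset.mem_insert, Finset.mem_singleton]
        omega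
  have hXT : ({1,n-1,n} : Finset ℕ) ≠ {n-2,n-1,n} := triple_ne 1 (by omega) (by omega)
  have hXM : ({1,n-1,n} : Finset ℕ) ≠ {n-3,n-2,n-1} := triple_ne n (by omega) (by omega)
  have hXP : ({1,n-1,n} : Finset ℕ) ≠ {n-4,n-3,n-1} := triple_ne n (by omega) (by omega)
  have hXU : ({1,n-1,n} : Finset ℕ) ∉ E ∪ A ∪ B := by
    refine hnotU _ n n 1 (by simp) (by simp) (by simp) ?_ ?_ ?_ <;>
      · intro i h1 h2
        simp only [Finset.mem_insert, Finset.mem_singleton]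
        omega
  rw [dstep]
  rw [Finset.card_insert_of_notMem (by
    simp only [Finset.mem_insert]
    push_neg
    exact ⟨hXT, hXM, hXP, hXU⟩)]
  rw [Finset.card_insert_of_notMem (by
    simp only [Finset.mem_insert]
    push_neg
    exact ⟨hTM, hTP, hTU⟩)]
  rw [Finset.card_insert_of_notMem (by
    simp only [Finset.mem_insert]
    push_neg
    exact ⟨hMP, hMU⟩)]
  rw [Finset.card_insert_of_notMem hPU]
  rw [hUcard]
  omega

end dstep_lemmas

lemma anchor {B : Finset (Finset ℕ)} {p : ℕ} (hB : IsCovering p 3 2 B) {x y : ℕ}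
    (hx : 1 ≤ x) (hxy : x < y) (hyp : y ≤ p) {d : Finset ℕ} (hxd : x ∈ d) (hyd : y ∈ d) :
    ∃ c ∈ B, 2 ≤ (d ∩ c).card := by
  obtain ⟨c, hcB, hsub⟩ := hB.2 {x,y} (by
    simp only [Finset.insert_subset_iff, Finset.singleton_subset_iff, Finset.mem_Icc]
    omega) (Finset.card_pair (by omega))
  have hxc : x ∈ c := hsub (by simp)
  have hyc : y ∈ c := hsub (by simp)
  exact ⟨c, hcB, two_le_inter (by omega) hxd hyd hxc hyc⟩

theorem Fgood : ∀ n, 3 ≤ n →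
    IsCovering n 3 2 (F n) ∧ IsConnectedFamily 2 (F n) ∧ (F n).card = n.choose 2 / 2 := by
  intro n
  induction n using Nat.strong_induction_on with
  | _ n ih =>
    intro hn
    by_cases h3 : n = 3
    · subst h3
      refine ⟨⟨?_, ?_⟩, ?_, ?_⟩
      · intro b hb
        rw [show F 3 = {{1,2,3}} from rfl, Finset.mem_singleton] at hb
        subst hb
        exact ⟨by decide, by decide⟩
      · intro s hs hcard
        refine ⟨{1,2,3}, by rw [show F 3 = {{1,2,3}} from rfl]; exact Finset.mem_singleton_self _, ?_⟩
        have : Finset.Icc 1 3 = ({1,2,3} : Finset ℕ) := by decide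
        rwa [this] at hs
      · exact conn_singleton _
      · decide
    have hn4 : 4 ≤ n := by omega
    by_cases h2 : n % 4 = 2
    · -- double step
      have hn6 : 6 ≤ n := by omega
      obtain ⟨hC, hconn, hcard⟩ := ih (n-3) (by omega) (by omega)
      have hFn := F_double n hn4 h2
      refine ⟨?_, ?_, ?_⟩
      · rw [hFn]
        exact cover_union (by omega) (by omega) hC (dstep_blocks hn6) (dstep_cover hn6 h2)
      · rw [hFn, dstep, Finset.union_insert, Finset.union_insert, Finset.union_insert]
        refine conn_insert (b := {1,n-1,n}) ?_ (c := ({n-2,n-1,n} : Finset ℕ))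
          (Finset.mem_insert_self _ _) (two_le_inter (x := n-1) (y := n) (by omega)
            (by simp)
            (by simp)
            (by simp)
            (by simp))
        refine conn_insert (b := {n-2,n-1,n}) ?_ (c := ({n-3,n-2,n-1} : Finset ℕ))
          (Finset.mem_insert_self _ _) (two_le_inter (x := n-2) (y := n-1) (by omega)
            (by simp)
            (by simp)
            (by simp)
            (by simp))
        refine conn_insert (b := {n-3,n-2,n-1}) ?_ (c := ({n-4,n-3,n-1} : Finset ℕ))
          (Finset.mem_union_right _ (Finset.mem_insert_self _ _))
          (two_le_inter (x := n-3) (y := n-1) (by omega)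
            (by simp)
            (by simp)
            (by simp)
            (by simp))
        refine conn_union hconn ?_
        intro d hd
        rcases Finset.mem_insert.1 hd with hd | hd
        · subst hd
          exact anchor hC (x := n-4) (y := n-3) (by omega) (by omega) (by omega)
            (by simp)
            (by simp)
        rcases Finset.mem_union.1 hd with hd | hd
        · rcases Finset.mem_union.1 hd with hd | hd
          · obtain ⟨i, hi, rfl⟩ := Finset.mem_image.1 hd
            rw [Finset.mem_Icc] at hi
            exact anchor hC (x := 2*i-1) (y := 2*i) (by omega) (by omega) (by omega)
              (by simp)
              (by simp)
          · obtain ⟨i, hi, rfl⟩ := Finset.mem_image.1 hd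
            rw [Finset.mem_Icc] at hi
            exact anchor hC (x := 2*i) (y := 2*i+1) (by omega) (by omega) (by omega)
              (by simp)
              (by simp)
        · obtain ⟨i, hi, rfl⟩ := Finset.mem_image.1 hd
          rw [Finset.mem_Icc] at hi
          exact anchor hC (x := 2*i) (y := 2*i+1) (by omega) (by omega) (by omega)
            (by simp)
            (by simp)
      · rw [hFn, card_union_new (fun b hb => (hC.1 b hb).1) (dstep_new hn6), hcard,
          dstep_card hn6 h2]
        have := tstep3 n h2 hn6
        omega
    · -- single step
      obtain ⟨hC, hconn, hcard⟩ := ih (n-1) (by omega) (by omega)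
      have hFn := F_single n hn4 h2
      refine ⟨?_, ?_, ?_⟩
      · rw [hFn]
        refine cover_union (by omega) (by omega) hC (sstep_blocks n hn4) ?_
        intro x y hx hxy hyn hy
        have hyn' : y = n := by omega
        obtain ⟨b, hb, hxb, hnb⟩ := sstep_cover n hn4 x hx (by omega)
        exact ⟨b, hb, hxb, by rw [hyn']; exact hnb⟩
      · rw [hFn]
        refine conn_union hconn ?_
        intro d hd
        rcases Finset.mem_union.1 hd with hd | hd
        · obtain ⟨i, hi, rfl⟩ := Finset.mem_image.1 hd
          rw [Finset.mem_Icc] at hi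
          exact anchor hC (x := 2*i-1) (y := 2*i) (by omega) (by omega) (by omega)
            (by simp)
            (by simp)
        · rcases Nat.decEq (n % 2) 0 with hpar | hpar
          · rw [if_neg hpar] at hd; simp at hd
          · rw [if_pos hpar] at hd
            rw [Finset.mem_singleton] at hd
            subst hd
            exact anchor hC (x := n-2) (y := n-1) (by omega) (by omega) (by omega)
              (by simp)
              (by simp)
      · rw [hFn, card_union_new (fun b hb => (hC.1 b hb).1)
          (fun d hd => ⟨n, sstep_new n hn4 d hd, by omega⟩), hcard, sstep_card n hn4]
        have := tstep1 n h2 hn4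
        omega

theorem stmt_7 (n : ℕ) (hn : 3 ≤ n) :
    ccNum n 2 = ((n.choose 2 - 1) + 1) / 2 := by
  have hpos : 0 < n.choose 2 := Nat.choose_pos (by omega)
  have hrhs : (n.choose 2 - 1) + 1 = n.choose 2 := by omega
  rw [hrhs]
  obtain ⟨hC, hconn, hcard⟩ := Fgood n hn
  have hmem : n.choose 2 / 2 ∈ {m | ∃ B : Finset (Finset ℕ),
      IsCovering n (2+1) 2 B ∧ IsConnectedFamily 2 B ∧ B.card = m} :=
    ⟨F n, hC, hconn, hcard⟩
  refine le_antisymm (Nat.sInf_le hmem) (le_csInf ⟨_, hmem⟩ ?_)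
  rintro m ⟨B, hB, hBconn, rfl⟩
  exact lower_bound n B hB hBconn
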